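/- Let 𝒞 be a Fraïssé class with Fraïssé limit U, and let T ∈ 𝒞̄. Then there exists a universal homogeneous retraction r : U ↠ T if and only if both of the following hold: (1) for all A,B₁,B₂ ∈ 𝒞, embeddings f₁ : A ↪ B₁, f₂ : A ↪ B₂ and homomorphisms h₁ : B₁ → T, h₂ : B₂ → T with h₁ ∘ f₁ = h₂ ∘ f₂, there exist C ∈ 𝒞, embeddings g₁ : B₁ ↪ C, g₂ : B₂ ↪ C and a homomorphism h : C → T such that g₁ ∘ f₁ = g₂ ∘ f₂, h ∘ g₁ = h₁ and h ∘ g₂ = h₂; and (2) for all A,B ∈ 𝒞, every embedding ι : A ↪ B and every homomorphism h : A → T there exists a homomorphism ĥ : B → T with ĥ ∘ ι = h. -/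

import Mathlib

universe u v w

open FirstOrder FirstOrder.Language CategoryTheory

namespace UHomog

variable (L : FirstOrder.Language.{u, v})

/-- The class `𝒞̄` of countable structures whose age is contained in `K`. -/
def InBar (K : Set (Bundled.{w} L.Structure)) (A : Type w) [L.Structure A] : Prop :=
  Countable A ∧ L.age A ⊆ K

/-- A homomorphism `u : U → T` is universal within `𝒞̄ = K̄` if every homomorphism from a member
of `K̄` to `T` factors through an embedding into `U`. -/
def IsUniversalHom (K : Set (Bundled.{w} L.Structure)) {U T : Type w}
    [L.Structure U] [L.Structure T] (u : U →[L] T) : Prop :=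
  ∀ A : Bundled.{w} L.Structure, InBar L K A → ∀ h : A →[L] T,
    ∃ ι : A ↪[L] U, ∀ a : A, u (ι a) = h a

/-- A homomorphism `u : U → T` is homogeneous if every embedding of a finitely generated
substructure of `U` into `U` compatible with `u` extends to an automorphism of `U` compatible
with `u`. -/
def IsHomogeneousHom {U T : Type w} [L.Structure U] [L.Structure T] (u : U →[L] T) : Prop :=
  ∀ S : L.Substructure U, S.FG → ∀ ι : S ↪[L] U,
    (∀ s : S, u (ι s) = u s) →
    ∃ α : U ≃[L] U, (∀ x : U, u (α x) = u x) ∧ ∀ s : S, α s = ι s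

/-- An age: a class of finitely generated structures with countably many isomorphism types,
closed under isomorphism, with the hereditary property and the joint embedding property. -/
def IsAge (K : Set (Bundled.{w} L.Structure)) : Prop :=
  K.Nonempty ∧
  (∀ M : Bundled.{w} L.Structure, M ∈ K → Structure.FG L M) ∧
  (∀ M N : Bundled.{w} L.Structure, Nonempty (M ≃[L] N) → (M ∈ K ↔ N ∈ K)) ∧
  (∃ S : Set (Bundled.{w} L.Structure), S.Countable ∧
    ∀ M ∈ K, ∃ N ∈ S, Nonempty (M ≃[L] N)) ∧
  Hereditary K ∧ JointEmbedding K

/-- The square `g₁ ∘ f₁ = g₂ ∘ f₂` is a pushout square in the category of countable structures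
with age contained in `K`, with homomorphisms as morphisms. -/
def IsPushoutSquare (K : Set (Bundled.{w} L.Structure)) {A B₁ B₂ C : Type w}
    [L.Structure A] [L.Structure B₁] [L.Structure B₂] [L.Structure C]
    (f₁ : A ↪[L] B₁) (f₂ : A ↪[L] B₂) (g₁ : B₁ →[L] C) (g₂ : B₂ →[L] C) : Prop :=
  g₁.comp f₁.toHom = g₂.comp f₂.toHom ∧
  ∀ D : Bundled.{w} L.Structure, InBar L K D → ∀ (k₁ : B₁ →[L] D) (k₂ : B₂ →[L] D),
    k₁.comp f₁.toHom = k₂.comp f₂.toHom →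
    ∃! m : C →[L] D, m.comp g₁ = k₁ ∧ m.comp g₂ = k₂

/-- A strict Fraïssé class: a Fraïssé class in which every span of embeddings can be completed to
a canonical (pushout) amalgam. -/
def IsStrictFraisse (K : Set (Bundled.{w} L.Structure)) : Prop :=
  IsFraisse K ∧
  ∀ A B₁ B₂ : Bundled.{w} L.Structure, A ∈ K → B₁ ∈ K → B₂ ∈ K →
    ∀ (f₁ : A ↪[L] B₁) (f₂ : A ↪[L] B₂),
      ∃ (C : Bundled.{w} L.Structure) (g₁ : B₁ →[L] C) (g₂ : B₂ →[L] C),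
        C ∈ K ∧ IsPushoutSquare L K f₁ f₂ g₁ g₂

/-- A Fraïssé class `K₀` is free in the strict Fraïssé class `K` if it is closed with respect to
canonical (pushout) amalgams in `K`. -/
def IsFreeIn (K₀ K : Set (Bundled.{w} L.Structure)) : Prop :=
  K₀ ⊆ K ∧
  ∀ A B₁ B₂ : Bundled.{w} L.Structure, A ∈ K₀ → B₁ ∈ K₀ → B₂ ∈ K₀ →
    ∀ (f₁ : A ↪[L] B₁) (f₂ : A ↪[L] B₂),
      ∃ (C : Bundled.{w} L.Structure) (g₁ : B₁ →[L] C) (g₂ : B₂ →[L] C),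
        C ∈ K₀ ∧ IsPushoutSquare L K f₁ f₂ g₁ g₂

/-- The amalgamated extension property. -/
def AmalgamatedExtension (K : Set (Bundled.{w} L.Structure)) : Prop :=
  ∀ A B₁ B₂ T : Bundled.{w} L.Structure, A ∈ K → B₁ ∈ K → B₂ ∈ K → T ∈ K →
    ∀ (f₁ : A ↪[L] B₁) (f₂ : A ↪[L] B₂) (h₁ : B₁ →[L] T) (h₂ : B₂ →[L] T),
      h₁.comp f₁.toHom = h₂.comp f₂.toHom →
      ∃ (C T' : Bundled.{w} L.Structure) (g₁ : B₁ ↪[L] C) (g₂ : B₂ ↪[L] C)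
        (k : T ↪[L] T') (h : C →[L] T'),
        C ∈ K ∧ T' ∈ K ∧ g₁.comp f₁ = g₂.comp f₂ ∧
        h.comp g₁.toHom = k.toHom.comp h₁ ∧ h.comp g₂.toHom = k.toHom.comp h₂

/-- The homo amalgamation property (HAP). -/
def HAP (K : Set (Bundled.{w} L.Structure)) : Prop :=
  ∀ A B₁ B₂ : Bundled.{w} L.Structure, A ∈ K → B₁ ∈ K → B₂ ∈ K →
    ∀ (f₁ : A ↪[L] B₁) (f₂ : A →[L] B₂),
      ∃ (C : Bundled.{w} L.Structure) (g₁ : B₁ →[L] C) (g₂ : B₂ ↪[L] C),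
        C ∈ K ∧ g₁.comp f₁.toHom = g₂.toHom.comp f₂

/-- A homomorphism `r : A → B` is a retraction if it has a section. -/
def IsRetraction {A B : Type w} [L.Structure A] [L.Structure B] (r : A →[L] B) : Prop :=
  ∃ ι : B →[L] A, ∀ b : B, r (ι b) = b

end UHomog

namespace UHomogAux

open FirstOrder FirstOrder.Language Structure Substructure

variable {L : FirstOrder.Language.{u, v}}

section Generic

variable {M : Type w} {N : Type w} [L.Structure M] [L.Structure N]

/-- Homomorphisms out of an `∅`-generated structure are unique. -/
theorem hom_unique (h : closure L (∅ : Set M) = ⊤) (f g : M →[L] N) : f = g :=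
  Hom.eq_of_eqOn_dense h (fun x hx => absurd hx (Set.notMem_empty x))

/-- The bottom substructure is generated by the empty set, as a structure in its own right. -/
theorem bot_closure_empty :
    closure L (∅ : Set (⊥ : L.Substructure M)) = ⊤ := by
  rw [eq_top_iff]
  rintro ⟨x, hx⟩ -
  have hmap : map (subtype (⊥ : L.Substructure M)).toHom
      (closure L (∅ : Set (⊥ : L.Substructure M))) = ⊥ := by
    rw [map_closure]
    simp [Substructure.closure_empty]
  have hx' : x ∈ map (subtype (⊥ : L.Substructure M)).toHom
      (closure L (∅ : Set (⊥ : L.Substructure M))) := by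
    rw [hmap]; exact hx
  obtain ⟨y, hy, hyx⟩ := hx'
  have : y = ⟨x, hx⟩ := Subtype.ext hyx
  rwa [this] at hy

/-- The range of an embedding of an `∅`-generated structure is `⊥`. -/
theorem range_eq_bot (q : M ↪[L] N) (h : closure L (∅ : Set M) = ⊤) :
    q.toHom.range = ⊥ := by
  rw [Hom.range_eq_map, ← h, map_closure]
  simp [Substructure.closure_empty]

theorem countable_hom (hM : Structure.FG L M) [Countable N] : Countable (M →[L] N) := by
  obtain ⟨s, hs, hcl⟩ := Structure.fg_iff.1 hM
  haveI : Finite s := hs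
  have : ∀ f g : M →[L] N, (∀ x : s, f x = g x) → f = g := by
    intro f g hfg
    exact Hom.eq_of_eqOn_dense hcl (fun x hx => hfg ⟨x, hx⟩)
  exact Function.Embedding.countable
    ⟨fun f : M →[L] N => (fun x : s => f x), fun f g hfg => this f g (congrFun hfg)⟩

theorem countable_embedding (hM : Structure.FG L M) [Countable N] :
    Countable (M ↪[L] N) := by
  haveI := countable_hom (N := N) hM
  exact Function.Embedding.countable
    ⟨fun f : M ↪[L] N => f.toHom, fun f g hfg => by
      ext x; exact congrFun (congrArg DFunLike.coe hfg) x⟩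

end Generic

section Forward

open UHomog

variable [Countable (Σ l, L.Functions l)] [Countable (Σ l, L.Relations l)]
variable {K : Set (Bundled.{w} L.Structure)} {U : Type w} [L.Structure U] [Countable U]
variable {T : Type w} [L.Structure T]

theorem inBar_of_mem_K (hK : IsFraisse K) {A : Bundled.{w} L.Structure} (hA : A ∈ K) :
    InBar L K A :=
  ⟨(Structure.cg_iff_countable).1 (hK.FG A hA).cg, hK.hereditary A hA⟩

theorem forward_dir (hK : IsFraisse K) (hU : IsFraisseLimit K U) (hT : InBar L K T)
    (r : U →[L] T) (huniv : IsUniversalHom L K r) (hhom : IsHomogeneousHom L r) :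
    ((∀ A B₁ B₂ : Bundled.{w} L.Structure, A ∈ K → B₁ ∈ K → B₂ ∈ K →
          ∀ (f₁ : A ↪[L] B₁) (f₂ : A ↪[L] B₂) (h₁ : B₁ →[L] T) (h₂ : B₂ →[L] T),
            h₁.comp f₁.toHom = h₂.comp f₂.toHom →
            ∃ C : Bundled.{w} L.Structure, C ∈ K ∧
              ∃ (g₁ : B₁ ↪[L] C) (g₂ : B₂ ↪[L] C) (h : C →[L] T),
                g₁.comp f₁ = g₂.comp f₂ ∧ h.comp g₁.toHom = h₁ ∧ h.comp g₂.toHom = h₂) ∧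
        (∀ A B : Bundled.{w} L.Structure, A ∈ K → B ∈ K →
          ∀ (ι : A ↪[L] B) (h : A →[L] T),
            ∃ hext : B →[L] T, hext.comp ι.toHom = h)) := by
  constructor
  · intro A B₁ B₂ hA hB₁ hB₂ f₁ f₂ h₁ h₂ hsq
    obtain ⟨e₁, he₁⟩ := huniv B₁ (inBar_of_mem_K hK hB₁) h₁
    obtain ⟨e₂, he₂⟩ := huniv B₂ (inBar_of_mem_K hK hB₂) h₂
    set E : A ↪[L] U := e₁.comp f₁ with hE
    have hfg : E.toHom.range.FG := (hK.FG A hA).range E.toHom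
    set ι : E.toHom.range ↪[L] U := (e₂.comp f₂).comp E.equivRange.symm.toEmbedding with hι
    have hcompat : ∀ s : E.toHom.range, r (ι s) = r s := by
      rintro ⟨x, a, rfl⟩
      have hs : E.equivRange a = ⟨E.toHom a, ⟨a, rfl⟩⟩ :=
        Subtype.ext (E.equivRange_apply a)
      have ha : E.equivRange.symm ⟨E.toHom a, ⟨a, rfl⟩⟩ = a := by
        rw [← hs]; exact E.equivRange.symm_apply_apply a
      show r (e₂ (f₂ (E.equivRange.symm ⟨E.toHom a, ⟨a, rfl⟩⟩))) = r (E.toHom a)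
      rw [ha]
      have hsq' := congrFun (congrArg DFunLike.coe hsq) a
      simp only [Hom.comp_apply, Embedding.coe_toHom] at hsq'
      show r (e₂ (f₂ a)) = r (e₁ (f₁ a))
      rw [he₂, ← hsq', he₁]
    obtain ⟨α, hαr, hαS⟩ := hhom E.toHom.range hfg ι hcompat
    set E₁ : B₁ ↪[L] U := α.toEmbedding.comp e₁ with hE₁
    set E₂ : B₂ ↪[L] U := e₂ with hE₂
    have key : ∀ a : A, E₁ (f₁ a) = E₂ (f₂ a) := by
      intro a
      have hmem : E a ∈ E.toHom.range := ⟨a, rfl⟩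
      have h1 : α (E a) = E₂ (f₂ (E.equivRange.symm ⟨E a, hmem⟩)) := hαS ⟨E a, hmem⟩
      have hs : E.equivRange a = ⟨E a, hmem⟩ := Subtype.ext (E.equivRange_apply a)
      have ha : E.equivRange.symm ⟨E a, hmem⟩ = a := by
        rw [← hs]; exact E.equivRange.symm_apply_apply a
      rw [ha] at h1
      exact h1
    set C' : L.Substructure U := E₁.toHom.range ⊔ E₂.toHom.range with hC'
    have hC'fg : C'.FG := ((hK.FG B₁ hB₁).range E₁.toHom).sup ((hK.FG B₂ hB₂).range E₂.toHom)
    refine ⟨Bundled.mk C', hU.age ▸ age.fg_substructure hC'fg,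
      (Substructure.inclusion le_sup_left).comp E₁.equivRange.toEmbedding,
      (Substructure.inclusion le_sup_right).comp E₂.equivRange.toEmbedding,
      r.comp (Substructure.subtype C').toHom, ?_, ?_, ?_⟩
    · ext a
      show ((Substructure.inclusion (le_sup_left : E₁.toHom.range ≤ C')) (E₁.equivRange (f₁ a)) : U) =
        ((Substructure.inclusion (le_sup_right : E₂.toHom.range ≤ C')) (E₂.equivRange (f₂ a)) : U)
      simpa [Substructure.coe_inclusion, Embedding.equivRange_apply] using key a
    · ext b
      show r (((Substructure.inclusion (le_sup_left : E₁.toHom.range ≤ C')) (E₁.equivRange b) : U)) = h₁ b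
      rw [Substructure.coe_inclusion]
      show r ((E₁.equivRange b : U)) = h₁ b
      rw [E₁.equivRange_apply]
      show r (α (e₁ b)) = h₁ b
      rw [hαr (e₁ b), he₁ b]
    · ext b
      show r (((Substructure.inclusion (le_sup_right : E₂.toHom.range ≤ C')) (E₂.equivRange b) : U)) = h₂ b
      rw [Substructure.coe_inclusion]
      show r ((E₂.equivRange b : U)) = h₂ b
      rw [E₂.equivRange_apply]
      exact he₂ b
  · intro A B hA hB ι h
    obtain ⟨e, he⟩ := huniv A (inBar_of_mem_K hK hA) h
    haveI : Nonempty (B ↪[L] U) := (hU.age.symm ▸ hB : B ∈ L.age U).2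
    obtain ⟨e', he'⟩ := hU.ultrahomogeneous.extend_embedding (hK.FG A hA) e ι
    refine ⟨r.comp e'.toHom, ?_⟩
    ext a
    have : e a = e' (ι a) := by rw [he']; rfl
    simp only [Hom.comp_apply, Embedding.coe_toHom]
    rw [← this, he]

end Forward


section PHomSec

variable {M : Type w} {T : Type w} [L.Structure M] [L.Structure T]

/-- A partial homomorphism from `M` to `T`: a homomorphism defined on a substructure. -/
structure PHom (L : FirstOrder.Language.{u, v}) (M T : Type w)
    [L.Structure M] [L.Structure T] where
  dom : L.Substructure M
  toHom : dom →[L] T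

namespace PHom

instance : Preorder (PHom L M T) where
  le f g := ∃ h : f.dom ≤ g.dom, ∀ x (hx : x ∈ f.dom), g.toHom ⟨x, h hx⟩ = f.toHom ⟨x, hx⟩
  le_refl f := ⟨le_rfl, fun x hx => rfl⟩
  le_trans f g h := by
    rintro ⟨h1, e1⟩ ⟨h2, e2⟩
    exact ⟨h1.trans h2, fun x hx => (e2 x (h1 hx)).trans (e1 x hx)⟩

theorem dom_le_dom {f g : PHom L M T} (h : f ≤ g) : f.dom ≤ g.dom := h.1

theorem apply_eq_of_le {f g : PHom L M T} (h : f ≤ g) {x : M} (hx : x ∈ f.dom) :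
    g.toHom ⟨x, h.1 hx⟩ = f.toHom ⟨x, hx⟩ := h.2 x hx

theorem toHom_eq_of_mem {f : PHom L M T} {x y : M} (hx : x ∈ f.dom) (hy : y ∈ f.dom)
    (hxy : x = y) : f.toHom ⟨x, hx⟩ = f.toHom ⟨y, hy⟩ := by subst hxy; rfl

variable (S : ℕ →o PHom L M T)

theorem dom_directed : Directed (· ≤ ·) (fun n => (S n).dom) :=
  fun i j => ⟨max i j, dom_le_dom (S.monotone (le_max_left i j)),
    dom_le_dom (S.monotone (le_max_right i j))⟩

theorem mem_glue_dom {x : M} (hx : x ∈ ⨆ n, (S n).dom) : ∃ n, x ∈ (S n).dom :=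
  (Substructure.mem_iSup_of_directed (dom_directed S)).1 hx

/-- The underlying function of the glued homomorphism. -/
noncomputable def glueFun (x : M) (hx : x ∈ ⨆ n, (S n).dom) : T :=
  (S (mem_glue_dom S hx).choose).toHom ⟨x, (mem_glue_dom S hx).choose_spec⟩

theorem glueFun_eq {x : M} (hx : x ∈ ⨆ n, (S n).dom) (n : ℕ) (hn : x ∈ (S n).dom) :
    glueFun S x hx = (S n).toHom ⟨x, hn⟩ := by
  obtain ⟨k, hk1, hk2⟩ := dom_directed S (mem_glue_dom S hx).choose n
  obtain ⟨k', hk'1, hk'2⟩ := dom_directed S k k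
  rw [glueFun, ← apply_eq_of_le (S.monotone (show (mem_glue_dom S hx).choose ≤
      max (mem_glue_dom S hx).choose n from le_max_left _ _)) (mem_glue_dom S hx).choose_spec,
    ← apply_eq_of_le (S.monotone (show n ≤ max (mem_glue_dom S hx).choose n from le_max_right _ _))
      hn]

/-- The union of a chain of partial homomorphisms. -/
noncomputable def glue : PHom L M T where
  dom := ⨆ n, (S n).dom
  toHom :=
  { toFun := fun x => glueFun S x.1 x.2
    map_fun' := by
      intro n F xs
      classical
      have hst : ∀ i : Fin n, ∃ m, ((xs i) : M) ∈ (S m).dom :=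
        fun i => mem_glue_dom S (xs i).2
      set N : ℕ := (Finset.univ : Finset (Fin n)).sup (fun i => (hst i).choose) with hN
      have hmem : ∀ i : Fin n, ((xs i) : M) ∈ (S N).dom := by
        intro i
        exact dom_le_dom (S.monotone (Finset.le_sup (Finset.mem_univ i)))
          (hst i).choose_spec
      have hfmem : ((Structure.funMap F xs :
          (⨆ m, (S m).dom : L.Substructure M)) : M) ∈ (S N).dom :=
        (S N).dom.fun_mem F _ hmem
      show glueFun S ((Structure.funMap F xs :
          (⨆ m, (S m).dom : L.Substructure M)) : M) (Structure.funMap F xs).2 =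
        Structure.funMap F (fun i => glueFun S ((xs i) : M) (xs i).2)
      rw [glueFun_eq S (Structure.funMap F xs).2 N hfmem]
      have h2 : (S N).toHom (Structure.funMap F (fun i => ⟨xs i, hmem i⟩)) =
          Structure.funMap F (fun i => (S N).toHom ⟨xs i, hmem i⟩) := (S N).toHom.map_fun F _
      have h3 : (S N).toHom ⟨_, hfmem⟩ =
          (S N).toHom (Structure.funMap F (fun i => (⟨xs i, hmem i⟩ : (S N).dom))) := by
        apply toHom_eq_of_mem
        rfl
      rw [h3, h2]
      congr 1
      funext i
      exact (glueFun_eq S (xs i).2 N (hmem i)).symm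
    map_rel' := by
      intro n R xs hR
      classical
      have hst : ∀ i : Fin n, ∃ m, ((xs i) : M) ∈ (S m).dom :=
        fun i => mem_glue_dom S (xs i).2
      set N : ℕ := (Finset.univ : Finset (Fin n)).sup (fun i => (hst i).choose) with hN
      have hmem : ∀ i : Fin n, ((xs i) : M) ∈ (S N).dom := by
        intro i
        exact dom_le_dom (S.monotone (Finset.le_sup (Finset.mem_univ i)))
          (hst i).choose_spec
      have hR' : Structure.RelMap R (fun i => (⟨xs i, hmem i⟩ : (S N).dom)) := hR
      have hrel := (S N).toHom.map_rel R _ hR'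
      have hfun : (fun i => glueFun S ((xs i) : M) (xs i).2) =
          (fun i => (S N).toHom ⟨xs i, hmem i⟩) := by
        funext i; exact glueFun_eq S (xs i).2 N (hmem i)
      show Structure.RelMap R (fun i => glueFun S ((xs i) : M) (xs i).2)
      rw [hfun]
      exact hrel }

theorem le_glue (n : ℕ) : S n ≤ glue S := by
  refine ⟨le_iSup (fun m => (S m).dom) n, fun x hx => ?_⟩
  exact glueFun_eq S (le_iSup (fun m => (S m).dom) n hx) n hx

theorem glue_apply {x : M} (hx : x ∈ (glue S).dom) (n : ℕ) (hn : x ∈ (S n).dom) :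
    (glue S).toHom ⟨x, hx⟩ = (S n).toHom ⟨x, hn⟩ :=
  glueFun_eq S hx n hn

/-- A partial homomorphism with full domain gives a total homomorphism. -/
noncomputable def toTotal (p : PHom L M T) (h : p.dom = ⊤) : M →[L] T where
  toFun x := p.toHom ⟨x, h.symm ▸ Substructure.mem_top x⟩
  map_fun' := by
    intro n F xs
    have h1 : p.toHom ⟨Structure.funMap F xs, h.symm ▸ Substructure.mem_top _⟩ =
        p.toHom (Structure.funMap F (fun i => ⟨xs i, h.symm ▸ Substructure.mem_top _⟩)) :=
      toHom_eq_of_mem _ _ rfl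
    show p.toHom ⟨Structure.funMap F xs, h.symm ▸ Substructure.mem_top _⟩ =
      Structure.funMap F (fun i => p.toHom ⟨xs i, h.symm ▸ Substructure.mem_top _⟩)
    rw [h1, p.toHom.map_fun]
    rfl
  map_rel' := by
    intro n R xs hR
    exact p.toHom.map_rel R (fun i => ⟨xs i, h.symm ▸ Substructure.mem_top _⟩) hR

theorem toTotal_apply (p : PHom L M T) (h : p.dom = ⊤) (x : M) (hx : x ∈ p.dom) :
    p.toTotal h x = p.toHom ⟨x, hx⟩ :=
  toHom_eq_of_mem _ _ rfl

end PHom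

end PHomSec

section Backward

open UHomog

variable [Countable (Σ l, L.Functions l)] [Countable (Σ l, L.Relations l)]
variable {K : Set (Bundled.{w} L.Structure)} {U : Type w} [L.Structure U] [Countable U]
variable {T : Type w} [L.Structure T]

/-- Richness of a homomorphism `r : U → T`: any compatible one-point (finite) extension of a
finitely generated substructure of `U` can be realized inside `U`, compatibly with `r`. -/
def Rich (K : Set (Bundled.{w} L.Structure)) {U T : Type w} [L.Structure U] [L.Structure T]
    (r : U →[L] T) : Prop :=
  ∀ S : L.Substructure U, S.FG → ∀ B : Bundled.{w} L.Structure, B ∈ K →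
    ∀ (e : S ↪[L] B) (h' : B →[L] T), (∀ x : S, h' (e x) = r x) →
    ∃ j : B ↪[L] U, (∀ x : S, j (e x) = x) ∧ (∀ b : B, r (j b) = h' b)

/-- The extension property of the Fraïssé limit, in pointwise form. -/
theorem extend_in_U (hK : IsFraisse K) (hU : IsFraisseLimit K U)
    (S : L.Substructure U) (hS : S.FG) {C : Bundled.{w} L.Structure} (hC : C ∈ K)
    (g : S ↪[L] C) : ∃ g' : C ↪[L] U, ∀ x : S, g' (g x) = x := by
  haveI : Nonempty (C ↪[L] U) := (hU.age.symm ▸ hC : C ∈ L.age U).2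
  obtain ⟨g', hg'⟩ := hU.ultrahomogeneous.extend_embedding
    ((S.fg_iff_structure_fg).1 hS) (Substructure.subtype S) g
  exact ⟨g', fun x => by
    have := congrFun (congrArg DFunLike.coe hg') x
    simp only [Embedding.comp_apply] at this
    exact this.symm⟩

/-- Condition (2) of the theorem. -/
def Cond2 (K : Set (Bundled.{w} L.Structure)) (T : Type w) [L.Structure T] : Prop :=
  ∀ A B : Bundled.{w} L.Structure, A ∈ K → B ∈ K →
    ∀ (ι : A ↪[L] B) (h : A →[L] T), ∃ hext : B →[L] T, hext.comp ι.toHom = h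

/-- Condition (1) of the theorem. -/
def Cond1 (K : Set (Bundled.{w} L.Structure)) (T : Type w) [L.Structure T] : Prop :=
  ∀ A B₁ B₂ : Bundled.{w} L.Structure, A ∈ K → B₁ ∈ K → B₂ ∈ K →
    ∀ (f₁ : A ↪[L] B₁) (f₂ : A ↪[L] B₂) (h₁ : B₁ →[L] T) (h₂ : B₂ →[L] T),
      h₁.comp f₁.toHom = h₂.comp f₂.toHom →
      ∃ C : Bundled.{w} L.Structure, C ∈ K ∧
        ∃ (g₁ : B₁ ↪[L] C) (g₂ : B₂ ↪[L] C) (h : C →[L] T),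
          g₁.comp f₁ = g₂.comp f₂ ∧ h.comp g₁.toHom = h₁ ∧ h.comp g₂.toHom = h₂

/-- Extending a partial homomorphism on `U` along an inclusion of finitely generated
substructures, using condition (2). -/
theorem ext_along_inclusion (hU : IsFraisseLimit K U) (H2 : Cond2 K T) {S S' : L.Substructure U}
    (hle : S ≤ S') (hS : S.FG) (hS' : S'.FG) (h : S →[L] T) :
    ∃ h' : S' →[L] T, ∀ x : S, h' (Substructure.inclusion hle x) = h x := by
  obtain ⟨h', hh'⟩ := H2 (Bundled.mk S) (Bundled.mk S')
    (hU.age ▸ age.fg_substructure hS) (hU.age ▸ age.fg_substructure hS')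
    (Substructure.inclusion hle) h
  exact ⟨h', fun x => congrFun (congrArg DFunLike.coe hh') x⟩

/-- There is a homomorphism from the least substructure of `U` to `T`. -/
theorem exists_bot_hom (hU : IsFraisseLimit K U) (hT : InBar L K T) (H2 : Cond2 K T) :
    ∃ _ : (⊥ : L.Substructure U) →[L] T, True := by
  have hbotT : Bundled.mk (↥(⊥ : L.Substructure T)) ∈ K :=
    hT.2 (age.fg_substructure Substructure.fg_bot)
  have hbotU : Bundled.mk (↥(⊥ : L.Substructure U)) ∈ K :=
    hU.age ▸ age.fg_substructure Substructure.fg_bot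
  haveI : Nonempty ((⊥ : L.Substructure T) ↪[L] U) := (hU.age.symm ▸ hbotT :
    Bundled.mk (↥(⊥ : L.Substructure T)) ∈ L.age U).2
  obtain ⟨q⟩ := ‹Nonempty ((⊥ : L.Substructure T) ↪[L] U)›
  have hrange : q.toHom.range = (⊥ : L.Substructure U) :=
    range_eq_bot q bot_closure_empty
  have hmem : ∀ x : (⊥ : L.Substructure T), q x ∈ (⊥ : L.Substructure U) := by
    intro x
    have : q x ∈ q.toHom.range := ⟨x, rfl⟩
    rwa [hrange] at this
  obtain ⟨h', -⟩ := H2 (Bundled.mk (↥(⊥ : L.Substructure T)))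
    (Bundled.mk (↥(⊥ : L.Substructure U))) hbotT hbotU
    (FirstOrder.Language.Embedding.codRestrict ⊥ q hmem)
    ((Substructure.subtype (⊥ : L.Substructure T)).toHom)
  exact ⟨h', trivial⟩

theorem exists_reps (hK : IsFraisse K) : ∃ K₀ : Set (Bundled.{w} L.Structure),
    K₀.Countable ∧ K₀ ⊆ K ∧ ∀ B ∈ K, ∃ B₀ ∈ K₀, Nonempty ((B : Type w) ≃[L] (B₀ : Type w)) := by
  refine ⟨Quotient.out '' (Quotient.mk' '' K), hK.is_essentially_countable.image _, ?_, ?_⟩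
  · rintro _ ⟨q, ⟨B, hB, rfl⟩, rfl⟩
    have hiso : Nonempty ((B : Type w) ≃[L] ((Quotient.mk' B).out : Type w)) :=
      Setoid.symm (Quotient.mk_out B)
    exact (hK.is_equiv_invariant hiso).1 hB
  · intro B hB
    refine ⟨(Quotient.mk' B).out, ⟨Quotient.mk' B, ⟨B, hB, rfl⟩, rfl⟩, ?_⟩
    exact Setoid.symm (Quotient.mk_out B)

/-- A partial homomorphism `p` on `U` has solved the task `(s, B, e, h')` if its domain contains
`closure s` and, if `(B, e, h')` is a compatible extension of `p` restricted to `closure s`,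
there is a realization of `B` in `U` over `closure s` compatible with `p`. -/
def TaskDone {U T : Type w} [L.Structure U] [L.Structure T] (s : Finset U)
    (B : Bundled.{w} L.Structure)
    (e : ↥(Substructure.closure L (s : Set U)) ↪[L] (B : Type w))
    (h' : (B : Type w) →[L] T) (p : PHom L U T) : Prop :=
  ∃ hcl : Substructure.closure L (s : Set U) ≤ p.dom,
    (∀ x : ↥(Substructure.closure L (s : Set U)), h' (e x) = p.toHom ⟨x.1, hcl x.2⟩) →
      ∃ j : (B : Type w) ↪[L] U,
        (∀ x : ↥(Substructure.closure L (s : Set U)), j (e x) = x.1) ∧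
        ∀ b : (B : Type w), ∃ hb : j b ∈ p.dom, p.toHom ⟨j b, hb⟩ = h' b

theorem exists_rich (hK : IsFraisse K) (hU : IsFraisseLimit K U) (hT : InBar L K T)
    (H1 : Cond1 K T) (H2 : Cond2 K T) :
    ∃ r : U →[L] T, Rich K r := by
  classical
  obtain ⟨K₀, hK₀c, hK₀K, hK₀rep⟩ := exists_reps (hK := hK)
  haveI : Countable T := hT.1
  haveI hctK₀ : Countable ↥K₀ := hK₀c.to_subtype
  let P := {p : PHom L U T // p.dom.FG}
  let Idx := U ⊕ (Σ (s : Finset U) (B : ↥K₀),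
    (↥(Substructure.closure L (s : Set U)) ↪[L] (B.1 : Type w)) × ((B.1 : Type w) →[L] T))
  haveI hIdx1 : ∀ (s : Finset U) (B : ↥K₀), Countable
      ((↥(Substructure.closure L (s : Set U)) ↪[L] (B.1 : Type w)) ×
        ((B.1 : Type w) →[L] T)) := by
    intro s B
    haveI : Countable (B.1 : Type w) :=
      (Structure.cg_iff_countable).1 (hK.FG B.1 (hK₀K B.2)).cg
    have hfg : Structure.FG L ↥(Substructure.closure L (s : Set U)) :=
      (Substructure.fg_iff_structure_fg _).1 (Substructure.fg_closure s.finite_toSet)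
    haveI := countable_embedding (N := (B.1 : Type w)) hfg
    haveI := countable_hom (N := T) (hK.FG B.1 (hK₀K B.2))
    infer_instance
  haveI : Countable Idx := by infer_instance
  haveI : Encodable Idx := Encodable.ofCountable Idx
  -- extension of the domain of a partial homomorphism
  have hext : ∀ (p : P) (V : L.Substructure U), V.FG →
      ∃ q : P, p ≤ q ∧ p.1.dom ⊔ V ≤ q.1.dom := by
    intro p V hV
    obtain ⟨h', hh'⟩ := ext_along_inclusion hU H2
      (le_sup_left : p.1.dom ≤ p.1.dom ⊔ V) p.2 (p.2.sup hV) p.1.toHom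
    exact ⟨⟨⟨p.1.dom ⊔ V, h'⟩, p.2.sup hV⟩,
      ⟨le_sup_left, fun x hx => hh' ⟨x, hx⟩⟩, le_rfl⟩
  -- the main amalgamation step
  have main : ∀ (s : Finset U) (B : Bundled.{w} L.Structure) (hB : B ∈ K)
      (e : ↥(Substructure.closure L (s : Set U)) ↪[L] (B : Type w))
      (h' : (B : Type w) →[L] T) (p : P),
      ∃ q : P, p ≤ q ∧ TaskDone s B e h' q.1 := by
    intro s B hB e h' p
    obtain ⟨q, hpq, hle⟩ := hext p (Substructure.closure L (s : Set U))
      (Substructure.fg_closure s.finite_toSet)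
    have hclq : Substructure.closure L (s : Set U) ≤ q.1.dom := le_sup_right.trans hle
    by_cases hcompat : ∀ x : ↥(Substructure.closure L (s : Set U)),
      h' (e x) = q.1.toHom ⟨x.1, hclq x.2⟩
    · -- amalgamate using condition (1)
      have hA : Bundled.mk ↥(Substructure.closure L (s : Set U)) ∈ K :=
        hU.age ▸ age.fg_substructure (Substructure.fg_closure s.finite_toSet)
      have hB₁ : Bundled.mk ↥q.1.dom ∈ K := hU.age ▸ age.fg_substructure q.2
      have hsq : q.1.toHom.comp (Substructure.inclusion hclq).toHom =
          h'.comp e.toHom := by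
        ext x
        exact (hcompat x).symm
      obtain ⟨C, hC, g₁, g₂, hc, hgsq, hhq, hhe⟩ :=
        H1 (Bundled.mk ↥(Substructure.closure L (s : Set U))) (Bundled.mk ↥q.1.dom) B
          hA hB₁ hB (Substructure.inclusion hclq) e q.1.toHom h' hsq
      obtain ⟨gh, hgh⟩ := extend_in_U hK hU q.1.dom q.2 hC g₁
      set p'' : P := ⟨⟨gh.toHom.range, hc.comp gh.equivRange.symm.toHom⟩,
        (hK.FG C hC).range gh.toHom⟩ with hp''
      have key : ∀ (c : (C : Type w)) (hmem : gh c ∈ gh.toHom.range),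
          p''.1.toHom ⟨gh c, hmem⟩ = hc c := by
        intro c hmem
        show hc (gh.equivRange.symm ⟨gh c, hmem⟩) = hc c
        have hs : gh.equivRange c = ⟨gh c, hmem⟩ := Subtype.ext (gh.equivRange_apply c)
        rw [← hs, gh.equivRange.symm_apply_apply]
      have hqmem : ∀ x (hx : x ∈ q.1.dom), x ∈ gh.toHom.range := by
        intro x hx
        exact ⟨g₁ ⟨x, hx⟩, hgh ⟨x, hx⟩⟩
      have hqp'' : q ≤ p'' := by
        refine ⟨fun x hx => hqmem x hx, ?_⟩
        intro x hx
        have h1 : p''.1.toHom ⟨x, hqmem x hx⟩ =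
            p''.1.toHom ⟨gh (g₁ ⟨x, hx⟩), ⟨g₁ ⟨x, hx⟩, rfl⟩⟩ :=
          PHom.toHom_eq_of_mem _ _ (hgh ⟨x, hx⟩).symm
        refine h1.trans ((key _ _).trans ?_)
        exact congrFun (congrArg DFunLike.coe hhq) ⟨x, hx⟩
      refine ⟨p'', hpq.trans hqp'', hclq.trans hqp''.1, fun _ => ?_⟩
      refine ⟨gh.comp g₂, ?_, ?_⟩
      · intro x
        have h2 : g₁ ((Substructure.inclusion hclq) x) = g₂ (e x) :=
          congrFun (congrArg DFunLike.coe hgsq) x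
        show gh (g₂ (e x)) = x.1
        rw [← h2, hgh]
        rfl
      · intro b
        refine ⟨⟨g₂ b, rfl⟩, ?_⟩
        show p''.1.toHom ⟨gh (g₂ b), _⟩ = h' b
        refine (key _ _).trans ?_
        exact congrFun (congrArg DFunLike.coe hhe) b
    · -- no compatibility: nothing to do
      refine ⟨q, hpq, hclq, fun hcomp' => absurd hcomp' hcompat⟩
  -- assemble the cofinal sets
  obtain ⟨h0, -⟩ := exists_bot_hom hU hT H2
  set p0 : P := ⟨⟨⊥, h0⟩, Substructure.fg_bot⟩ with hp0
  let D : Idx → Order.Cofinal P := fun i =>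
    Sum.rec
      (fun u => ⟨{p : P | u ∈ p.1.dom},
        fun p => by
          obtain ⟨q, hpq, hle⟩ := hext p (Substructure.closure L ({u} : Set U))
            (Substructure.fg_closure_singleton u)
          exact ⟨q, (le_sup_right.trans hle)
            (Substructure.subset_closure (Set.mem_singleton u)), hpq⟩⟩)
      (fun t => ⟨{p : P | TaskDone t.1 t.2.1.1 t.2.2.1 t.2.2.2 p.1},
        fun p => by
          obtain ⟨q, hpq, hdone⟩ := main t.1 t.2.1.1 (hK₀K t.2.1.2) t.2.2.1 t.2.2.2 p
          exact ⟨q, hdone, hpq⟩⟩) i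
  let seq : ℕ → P := Order.sequenceOfCofinals p0 D
  let S : ℕ →o PHom L U T :=
    ⟨fun n => (seq n).1, fun m n hmn => Order.sequenceOfCofinals.monotone p0 D hmn⟩
  set G : PHom L U T := PHom.glue S with hG
  have hdomtop : G.dom = ⊤ := by
    rw [eq_top_iff]
    intro u _
    have hmem : seq (Encodable.encode (Sum.inl u : Idx) + 1) ∈ D (Sum.inl u) :=
      Order.sequenceOfCofinals.encode_mem p0 D (Sum.inl u)
    exact le_iSup (fun n => (S n).dom) (Encodable.encode (Sum.inl u : Idx) + 1) hmem
  refine ⟨G.toTotal hdomtop, ?_⟩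
  -- richness
  intro S₀ hS₀ B hB e h' hcompat
  set r : U →[L] T := G.toTotal hdomtop with hr
  obtain ⟨s, hs⟩ := hS₀
  obtain ⟨B₀, hB₀, ⟨φ⟩⟩ := hK₀rep B hB
  have hscl : Substructure.closure L (s : Set U) = S₀ := hs
  -- transport the task along `φ` and the equality of substructures
  let e₀ : ↥(Substructure.closure L (s : Set U)) ↪[L] (B₀ : Type w) :=
    φ.toEmbedding.comp (e.comp (Substructure.inclusion (le_of_eq hscl)))
  let h₀ : (B₀ : Type w) →[L] T := h'.comp φ.symm.toHom
  set k : ℕ := Encodable.encode (Sum.inr ⟨s, ⟨B₀, hB₀⟩, e₀, h₀⟩ : Idx) + 1 with hk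
  have hmem := Order.sequenceOfCofinals.encode_mem p0 D (Sum.inr ⟨s, ⟨B₀, hB₀⟩, e₀, h₀⟩ : Idx)
  obtain ⟨hcl, himpl⟩ := (hmem : TaskDone s B₀ e₀ h₀ (S k))
  -- the stage-`k` homomorphism is the restriction of `r`
  have hstage : ∀ x (hx : x ∈ (S k).dom), (S k).toHom ⟨x, hx⟩ = r x := by
    intro x hx
    rw [hr, PHom.toTotal_apply G hdomtop x (le_iSup (fun n => (S n).dom) k hx)]
    exact (PHom.glue_apply S _ k hx).symm
  obtain ⟨j₀, hj₀1, hj₀2⟩ := himpl (by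
    intro x
    refine Eq.trans ?_ (hstage x.1 (hcl x.2)).symm
    show h' (φ.symm (φ (e ((Substructure.inclusion (le_of_eq hscl)) x)))) = r x.1
    rw [φ.symm_apply_apply]
    exact hcompat ((Substructure.inclusion (le_of_eq hscl)) x))
  refine ⟨j₀.comp φ.toEmbedding, ?_, ?_⟩
  · intro x
    have hx' : x.1 ∈ Substructure.closure L (s : Set U) := hscl ▸ x.2
    have := hj₀1 ⟨x.1, hx'⟩
    show j₀ (φ (e x)) = x.1
    have hinc : (Substructure.inclusion (le_of_eq hscl)) ⟨x.1, hx'⟩ = x :=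
      Subtype.ext rfl
    calc j₀ (φ (e x)) = j₀ (e₀ ⟨x.1, hx'⟩) := by
          show _ = j₀ (φ (e ((Substructure.inclusion (le_of_eq hscl)) ⟨x.1, hx'⟩)))
          rw [hinc]
      _ = x.1 := hj₀1 ⟨x.1, hx'⟩
  · intro b
    obtain ⟨hb, hval⟩ := hj₀2 (φ b)
    show r (j₀ (φ b)) = h' b
    calc r (j₀ (φ b)) = (S k).toHom ⟨j₀ (φ b), hb⟩ := (hstage _ hb).symm
      _ = h₀ (φ b) := hval
      _ = h' b := by
          show h' (φ.symm (φ b)) = h' b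
          rw [φ.symm_apply_apply]

/-- A partial equivalence from `A` to `U` is good (w.r.t. `r : U → T` and `h : A → T`) if it
intertwines `h` and `r`. -/
def GoodEquiv {U T : Type w} [L.Structure U] [L.Structure T] (r : U →[L] T)
    {A : Type w} [L.Structure A] (h : A →[L] T) (f : A ≃ₚ[L] U) : Prop :=
  ∀ x (hx : x ∈ f.dom), r ((f.toEquiv ⟨x, hx⟩ : f.cod) : U) = h x

theorem goodEquiv_symm {r : U →[L] T} {f : U ≃ₚ[L] U} (hf : GoodEquiv r r f) :
    GoodEquiv r r f.symm := by
  intro y hy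
  have h1 := hf (f.toEquiv.symm ⟨y, hy⟩).1 (f.toEquiv.symm ⟨y, hy⟩).2
  rw [Subtype.eta, f.toEquiv.apply_symm_apply] at h1
  exact h1.symm

theorem good_extend {r : U →[L] T} (hK : IsFraisse K) (hU : IsFraisseLimit K U)
    (hRich : Rich K r) {A : Type w} [L.Structure A] (h : A →[L] T)
    (hsub : ∀ S : L.Substructure A, S.FG → Bundled.mk ↥S ∈ K)
    (f : A ≃ₚ[L] U) (hfg : f.dom.FG) (hf : GoodEquiv r h f) (a : A) :
    ∃ g : A ≃ₚ[L] U, g.dom.FG ∧ GoodEquiv r h g ∧ a ∈ g.dom ∧ f ≤ g := by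
  classical
  set S' : L.Substructure A := f.dom ⊔ Substructure.closure L ({a} : Set A) with hS'
  have hS'fg : S'.FG := hfg.sup (Substructure.fg_closure_singleton a)
  have hcodfg : f.cod.FG := f.dom_fg_iff_cod_fg.1 hfg
  let e : ↥f.cod ↪[L] ↥S' :=
    (Substructure.inclusion (le_sup_left : f.dom ≤ S')).comp f.toEquiv.symm.toEmbedding
  let h' : ↥S' →[L] T := h.comp (Substructure.subtype S').toHom
  have hcomp : ∀ y : f.cod, h' (e y) = r y := by
    intro y
    have h1 := hf (f.toEquiv.symm y).1 (f.toEquiv.symm y).2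
    rw [Subtype.eta, f.toEquiv.apply_symm_apply] at h1
    exact h1.symm
  obtain ⟨j, hj1, hj2⟩ := hRich f.cod hcodfg (Bundled.mk ↥S') (hsub S' hS'fg) e h' hcomp
  refine ⟨⟨S', j.toHom.range, j.equivRange⟩, hS'fg, ?_, ?_, ?_⟩
  · intro x hx
    show r ((j.equivRange ⟨x, hx⟩ : j.toHom.range) : U) = h x
    rw [j.equivRange_apply]
    exact hj2 ⟨x, hx⟩
  · exact (le_sup_right : Substructure.closure L ({a} : Set A) ≤ S')
      (Substructure.subset_closure (Set.mem_singleton a))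
  · refine ⟨le_sup_left, ?_⟩
    ext x
    show ((j.equivRange ((Substructure.inclusion le_sup_left) x) : j.toHom.range) : U) =
      ((f.toEquiv x : f.cod) : U)
    rw [j.equivRange_apply]
    have hix : (Substructure.inclusion (le_sup_left : f.dom ≤ S')) x = e (f.toEquiv x) := by
      apply Subtype.ext
      show (x : A) = ((f.toEquiv.symm (f.toEquiv x) : f.dom) : A)
      rw [f.toEquiv.symm_apply_apply]
    rw [hix]
    exact hj1 (f.toEquiv x)

theorem stageval {A : Type w} [L.Structure A] (Sq : ℕ →o (A ≃ₚ[L] U)) (n : ℕ) (x : A)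
    (hx : x ∈ (Sq n).dom) (hx' : x ∈ (DirectLimit.partialEquivLimit Sq).dom) :
    (((DirectLimit.partialEquivLimit Sq).toEquiv ⟨x, hx'⟩ :
        (DirectLimit.partialEquivLimit Sq).cod) : U) =
      (((Sq n).toEquiv ⟨x, hx⟩ : (Sq n).cod) : U) := by
  have hle := DirectLimit.le_partialEquivLimit Sq n
  have h1 := PartialEquiv.toEquiv_inclusion_apply hle ⟨x, hx⟩
  have hcast : (Substructure.inclusion (PartialEquiv.dom_le_dom hle)) ⟨x, hx⟩ =
      (⟨x, hx'⟩ : (DirectLimit.partialEquivLimit Sq).dom) := Subtype.ext rfl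
  rw [hcast] at h1
  exact congrArg Subtype.val h1

theorem rich_universal {r : U →[L] T} (hK : IsFraisse K) (hU : IsFraisseLimit K U)
    (hRich : Rich K r) : IsUniversalHom L K r := by
  classical
  intro A hA h
  haveI : Countable (A : Type w) := hA.1
  have hsub : ∀ S : L.Substructure (A : Type w), S.FG → Bundled.mk ↥S ∈ K :=
    fun S hS => hA.2 (age.fg_substructure hS)
  have hbotA : Bundled.mk ↥(⊥ : L.Substructure (A : Type w)) ∈ K :=
    hsub ⊥ Substructure.fg_bot
  haveI hne : Nonempty (↥(⊥ : L.Substructure (A : Type w)) ↪[L] U) :=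
    (hU.age.symm ▸ hbotA : _ ∈ L.age U).2
  obtain ⟨q⟩ := hne
  have hhomeq : r.comp q.toHom =
      h.comp (Substructure.subtype (⊥ : L.Substructure (A : Type w))).toHom :=
    hom_unique bot_closure_empty _ _
  set f₀ : (A : Type w) ≃ₚ[L] U := ⟨⊥, q.toHom.range, q.equivRange⟩ with hf₀def
  have hf₀ : GoodEquiv r h f₀ := by
    intro x hx
    show r ((q.equivRange ⟨x, hx⟩ : q.toHom.range) : U) = h x
    rw [q.equivRange_apply]
    exact congrFun (congrArg DFunLike.coe hhomeq) ⟨x, hx⟩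
  let GP := {f : L.FGEquiv (A : Type w) U // GoodEquiv r h f.1}
  let D : (a : (A : Type w)) → Order.Cofinal GP := fun a =>
    ⟨{f : GP | a ∈ f.1.1.dom}, by
      intro f
      obtain ⟨g, hgfg, hggood, hamem, hle⟩ := good_extend hK hU hRich h hsub f.1.1 f.1.2 f.2 a
      exact ⟨⟨⟨g, hgfg⟩, hggood⟩, hamem, hle⟩⟩
  haveI : Encodable (A : Type w) := Encodable.ofCountable _
  let g₀ : GP := ⟨⟨f₀, Substructure.fg_bot⟩, hf₀⟩
  let seq : ℕ → GP := Order.sequenceOfCofinals g₀ D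
  let Sq : ℕ →o ((A : Type w) ≃ₚ[L] U) :=
    ⟨fun n => (seq n).1.1, fun m n hmn => Order.sequenceOfCofinals.monotone g₀ D hmn⟩
  have hdomtop : (DirectLimit.partialEquivLimit Sq).dom = ⊤ := by
    rw [eq_top_iff]
    intro a _
    have hmem : a ∈ (Sq (Encodable.encode a + 1)).dom :=
      Order.sequenceOfCofinals.encode_mem g₀ D a
    exact PartialEquiv.dom_le_dom (DirectLimit.le_partialEquivLimit Sq _) hmem
  refine ⟨PartialEquiv.toEmbeddingOfEqTop hdomtop, fun a => ?_⟩
  rw [PartialEquiv.toEmbeddingOfEqTop_apply hdomtop a]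
  have hmem : a ∈ (Sq (Encodable.encode a + 1)).dom :=
    Order.sequenceOfCofinals.encode_mem g₀ D a
  rw [stageval Sq (Encodable.encode a + 1) a hmem _]
  exact (seq (Encodable.encode a + 1)).2 a hmem

theorem rich_homogeneous {r : U →[L] T} (hK : IsFraisse K) (hU : IsFraisseLimit K U)
    (hRich : Rich K r) : IsHomogeneousHom L r := by
  classical
  intro S₀ hS₀ ι hι
  have hsub : ∀ S : L.Substructure U, S.FG → Bundled.mk ↥S ∈ K :=
    fun S hS => hU.age ▸ age.fg_substructure hS
  let GQ := {f : L.FGEquiv U U // GoodEquiv r r f.1}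
  let D : U ⊕ U → Order.Cofinal GQ := fun i =>
    Sum.rec
      (fun m => ⟨{f : GQ | m ∈ f.1.1.dom}, by
        intro f
        obtain ⟨g, hgfg, hggood, hmem, hle⟩ :=
          good_extend hK hU hRich r hsub f.1.1 f.1.2 f.2 m
        exact ⟨⟨⟨g, hgfg⟩, hggood⟩, hmem, hle⟩⟩)
      (fun m => ⟨{f : GQ | m ∈ f.1.1.cod}, by
        intro f
        obtain ⟨g, hgfg, hggood, hmem, hle⟩ :=
          good_extend hK hU hRich r hsub f.1.1.symm (f.1.1.dom_fg_iff_cod_fg.1 f.1.2)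
            (goodEquiv_symm f.2) m
        refine ⟨⟨⟨g.symm, g.dom_fg_iff_cod_fg.1 hgfg⟩, goodEquiv_symm hggood⟩, hmem, ?_⟩
        show f.1.1 ≤ g.symm
        rw [← PartialEquiv.symm_le_iff]
        exact hle⟩) i
  haveI : Encodable (U ⊕ U) := Encodable.ofCountable _
  let g₀ : GQ := ⟨⟨⟨S₀, ι.toHom.range, ι.equivRange⟩, hS₀⟩, by
    intro x hx
    show r ((ι.equivRange ⟨x, hx⟩ : ι.toHom.range) : U) = r x
    rw [ι.equivRange_apply]
    exact hι ⟨x, hx⟩⟩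
  let seq : ℕ → GQ := Order.sequenceOfCofinals g₀ D
  let Sq : ℕ →o (U ≃ₚ[L] U) :=
    ⟨fun n => (seq n).1.1, fun m n hmn => Order.sequenceOfCofinals.monotone g₀ D hmn⟩
  have hdomtop : (DirectLimit.partialEquivLimit Sq).dom = ⊤ := by
    rw [eq_top_iff]
    intro m _
    have hmem : m ∈ (Sq (Encodable.encode (Sum.inl m : U ⊕ U) + 1)).dom :=
      Order.sequenceOfCofinals.encode_mem g₀ D (Sum.inl m)
    exact PartialEquiv.dom_le_dom (DirectLimit.le_partialEquivLimit Sq _) hmem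
  have hcodtop : (DirectLimit.partialEquivLimit Sq).cod = ⊤ := by
    rw [eq_top_iff]
    intro m _
    have hmem : m ∈ (Sq (Encodable.encode (Sum.inr m : U ⊕ U) + 1)).cod :=
      Order.sequenceOfCofinals.encode_mem g₀ D (Sum.inr m)
    exact PartialEquiv.cod_le_cod (DirectLimit.le_partialEquivLimit Sq _) hmem
  set α : U ≃[L] U := PartialEquiv.toEquivOfEqTop hdomtop hcodtop with hα
  have hαx : ∀ x : U, α x = PartialEquiv.toEmbeddingOfEqTop hdomtop x := by
    intro x
    rw [← PartialEquiv.toEquivOfEqTop_toEmbedding hdomtop hcodtop]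
    rfl
  have hstage : ∀ (x : U) (n : ℕ) (hx : x ∈ (Sq n).dom),
      α x = (((Sq n).toEquiv ⟨x, hx⟩ : (Sq n).cod) : U) := by
    intro x n hx
    have hx' : x ∈ (DirectLimit.partialEquivLimit Sq).dom := hdomtop.symm ▸ Substructure.mem_top x
    rw [hαx x, PartialEquiv.toEmbeddingOfEqTop_apply hdomtop x]
    exact stageval Sq n x hx hx'
  refine ⟨α, ?_, ?_⟩
  · intro x
    have hx : x ∈ (Sq (Encodable.encode (Sum.inl x : U ⊕ U) + 1)).dom :=
      Order.sequenceOfCofinals.encode_mem g₀ D (Sum.inl x)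
    rw [hstage x _ hx]
    exact (seq (Encodable.encode (Sum.inl x : U ⊕ U) + 1)).2 x hx
  · intro s
    have hs0 : (s : U) ∈ (Sq 0).dom := s.2
    rw [hstage (s : U) 0 hs0]
    show ((ι.equivRange ⟨(s : U), s.2⟩ : ι.toHom.range) : U) = ι s
    rw [ι.equivRange_apply]

end Backward

end UHomogAux

open UHomog FirstOrder FirstOrder.Language in
/-- Theorem: characterization of the `T ∈ K̄` admitting a universal homogeneous retraction from
the Fraïssé limit `U` of `K`. -/
theorem statement6
    (L : FirstOrder.Language.{u, v})
    [Countable (Σ l, L.Functions l)] [Countable (Σ l, L.Relations l)]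
    (K : Set (Bundled.{w} L.Structure)) (hK : IsFraisse K)
    (U : Type w) [L.Structure U] [Countable U] (hU : IsFraisseLimit K U)
    (T : Type w) [L.Structure T] (hT : InBar L K T) :
    (∃ r : U →[L] T, IsRetraction L r ∧ IsUniversalHom L K r ∧ IsHomogeneousHom L r) ↔
      ((∀ A B₁ B₂ : Bundled.{w} L.Structure, A ∈ K → B₁ ∈ K → B₂ ∈ K →
          ∀ (f₁ : A ↪[L] B₁) (f₂ : A ↪[L] B₂) (h₁ : B₁ →[L] T) (h₂ : B₂ →[L] T),
            h₁.comp f₁.toHom = h₂.comp f₂.toHom →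
            ∃ C : Bundled.{w} L.Structure, C ∈ K ∧
              ∃ (g₁ : B₁ ↪[L] C) (g₂ : B₂ ↪[L] C) (h : C →[L] T),
                g₁.comp f₁ = g₂.comp f₂ ∧ h.comp g₁.toHom = h₁ ∧ h.comp g₂.toHom = h₂) ∧
        (∀ A B : Bundled.{w} L.Structure, A ∈ K → B ∈ K →
          ∀ (ι : A ↪[L] B) (h : A →[L] T),
            ∃ hext : B →[L] T, hext.comp ι.toHom = h)) := by
  constructor
  · rintro ⟨r, hret, huniv, hhom⟩
    exact UHomogAux.forward_dir hK hU hT r huniv hhom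
  · rintro ⟨h1, h2⟩
    obtain ⟨r, hRich⟩ := UHomogAux.exists_rich hK hU hT h1 h2
    have huniv := UHomogAux.rich_universal hK hU hRich
    have hhom := UHomogAux.rich_homogeneous hK hU hRich
    refine ⟨r, ?_, huniv, hhom⟩
    obtain ⟨ι, hι⟩ := huniv ⟨T, ‹L.Structure T›⟩ hT
      (FirstOrder.Language.Hom.id L T)
    exact ⟨ι.toHom, fun b => hι b⟩
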